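/- Let σ = {v_0,…,v_k} and σ̃ = {ṽ_0,…,ṽ_k} be k-simplices in ℝ^n with | ‖v_i − v_j‖ − ‖ṽ_i − ṽ_j‖ | ≤ C_0 L(σ) for all i < j, where C_0 = η Θ(σ)²/4 with 0 ≤ η ≤ 1. Let P, P̃ be the matrices of edge vectors from v_0 and ṽ_0 respectively. Then σ_k(P̃) ≥ (1 − η) σ_k(P) and Θ(σ̃) ≥ (4/(5√k)) (1 − η) Θ(σ). -/

import Mathlib

noncomputable section

open Metric Matrix

/-- The altitude of vertex `i` of the simplex with vertices `v`: the distance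
from `v i` to the affine hull of the opposite facet. -/
def altitude {m k : ℕ} (v : Fin (k + 1) → EuclideanSpace ℝ (Fin m)) (i : Fin (k + 1)) : ℝ :=
  Metric.infDist (v i) (affineSpan ℝ (v '' {j | j ≠ i}) : Set (EuclideanSpace ℝ (Fin m)))

/-- The longest edge length of the simplex with vertices `v`. -/
def longestEdge {m k : ℕ} (v : Fin (k + 1) → EuclideanSpace ℝ (Fin m)) : ℝ :=
  sSup {d : ℝ | ∃ i j, d = dist (v i) (v j)}

/-- The thickness of the simplex with vertices `v`. -/
def thickness {m k : ℕ} (v : Fin (k + 1) → EuclideanSpace ℝ (Fin m)) : ℝ :=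
  if k = 0 then 1 else (sInf (Set.range (altitude v))) / (k * longestEdge v)

/-- The `m × k` matrix whose `j`-th column is `v (j+1) - v 0`. -/
def edgeMat {m k : ℕ} (v : Fin (k + 1) → EuclideanSpace ℝ (Fin m)) :
    Matrix (Fin m) (Fin k) ℝ :=
  Matrix.of fun i j => (v j.succ - v 0) i

/-- The smallest singular value of a matrix: the infimum of `‖P x‖` over unit
vectors `x` (Euclidean norms). -/
def smallestSing {m k : ℕ} (P : Matrix (Fin m) (Fin k) ℝ) : ℝ :=
  sInf { r : ℝ | ∃ x : EuclideanSpace ℝ (Fin k), ‖x‖ = 1 ∧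
    r = ‖(EuclideanSpace.equiv (Fin m) ℝ).symm (P.mulVec (EuclideanSpace.equiv (Fin k) ℝ x))‖ }

variable {n k : ℕ}

def pvec (v : Fin (k+1) → EuclideanSpace ℝ (Fin n)) (l : Fin k) : EuclideanSpace ℝ (Fin n) :=
  v l.succ - v 0

def Pv (v : Fin (k+1) → EuclideanSpace ℝ (Fin n)) (x : EuclideanSpace ℝ (Fin k)) :
    EuclideanSpace ℝ (Fin n) := ∑ l, x l • pvec v l

lemma mulVec_eq (v : Fin (k+1) → EuclideanSpace ℝ (Fin n)) (x : EuclideanSpace ℝ (Fin k)) :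
    (EuclideanSpace.equiv (Fin n) ℝ).symm ((edgeMat v).mulVec ((EuclideanSpace.equiv (Fin k) ℝ) x)) = Pv v x := by
  apply (EuclideanSpace.equiv (Fin n) ℝ).injective
  funext i
  simp [edgeMat, Matrix.mulVec, dotProduct, Pv, pvec, EuclideanSpace.equiv,
    Finset.sum_apply, mul_comm]

lemma smallestSing_eq (v : Fin (k+1) → EuclideanSpace ℝ (Fin n)) :
    smallestSing (edgeMat v) = sInf { r : ℝ | ∃ x : EuclideanSpace ℝ (Fin k), ‖x‖ = 1 ∧ r = ‖Pv v x‖ } := by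
  unfold smallestSing
  congr 1
  ext r
  simp only [Set.mem_setOf_eq, mulVec_eq]

lemma edgeSet_eq (v : Fin (k+1) → EuclideanSpace ℝ (Fin n)) :
    {d : ℝ | ∃ i j, d = dist (v i) (v j)} =
      Set.range (fun p : Fin (k+1) × Fin (k+1) => dist (v p.1) (v p.2)) := by
  ext d; constructor
  · rintro ⟨i, j, rfl⟩; exact ⟨(i, j), rfl⟩
  · rintro ⟨⟨i, j⟩, rfl⟩; exact ⟨i, j, rfl⟩

lemma edgeSet_bddAbove (v : Fin (k+1) → EuclideanSpace ℝ (Fin n)) :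
    BddAbove {d : ℝ | ∃ i j, d = dist (v i) (v j)} := by
  rw [edgeSet_eq]; exact (Set.finite_range _).bddAbove

lemma dist_le_longestEdge (v : Fin (k+1) → EuclideanSpace ℝ (Fin n)) (i j : Fin (k+1)) :
    dist (v i) (v j) ≤ longestEdge v :=
  le_csSup (edgeSet_bddAbove v) ⟨i, j, rfl⟩

lemma longestEdge_nonneg (v : Fin (k+1) → EuclideanSpace ℝ (Fin n)) : 0 ≤ longestEdge v := by
  have := dist_le_longestEdge v 0 0
  simpa using this

lemma altitude_nonneg (v : Fin (k+1) → EuclideanSpace ℝ (Fin n)) (i : Fin (k+1)) :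
    0 ≤ altitude v i := Metric.infDist_nonneg

lemma minalt_nonneg (v : Fin (k+1) → EuclideanSpace ℝ (Fin n)) :
    0 ≤ sInf (Set.range (altitude v)) := by
  apply Real.sInf_nonneg
  rintro r ⟨i, rfl⟩; exact altitude_nonneg v i

lemma thickness_nonneg (v : Fin (k+1) → EuclideanSpace ℝ (Fin n)) : 0 ≤ thickness v := by
  unfold thickness
  split
  · norm_num
  · apply div_nonneg (minalt_nonneg v)
    exact mul_nonneg (by positivity) (longestEdge_nonneg v)

lemma minalt_le_longestEdge (hk : k ≠ 0) (v : Fin (k+1) → EuclideanSpace ℝ (Fin n)) :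
    sInf (Set.range (altitude v)) ≤ longestEdge v := by
  have h1 : (⟨1, by omega⟩ : Fin (k+1)) ≠ 0 := by
    simp [Fin.ext_iff]
  have hmem : v 0 ∈ (affineSpan ℝ (v '' {j | j ≠ (⟨1, by omega⟩ : Fin (k+1))}) : Set (EuclideanSpace ℝ (Fin n))) :=
    subset_affineSpan ℝ _ ⟨0, by simpa [Set.mem_setOf_eq] using h1.symm, rfl⟩
  have halt : altitude v ⟨1, by omega⟩ ≤ dist (v ⟨1, by omega⟩) (v 0) :=
    Metric.infDist_le_dist_of_mem hmem
  have : sInf (Set.range (altitude v)) ≤ altitude v ⟨1, by omega⟩ := by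
    apply csInf_le _ (Set.mem_range_self _)
    exact ⟨0, fun r hr => by obtain ⟨i, rfl⟩ := hr; exact altitude_nonneg v i⟩
  calc sInf (Set.range (altitude v)) ≤ altitude v ⟨1, by omega⟩ := this
    _ ≤ dist (v ⟨1, by omega⟩) (v 0) := halt
    _ ≤ longestEdge v := dist_le_longestEdge v _ _

lemma thickness_le_one (v : Fin (k+1) → EuclideanSpace ℝ (Fin n)) : thickness v ≤ 1 := by
  unfold thickness
  split
  · exact le_refl 1
  · rename_i hk
    rcases eq_or_lt_of_le (longestEdge_nonneg v) with hL | hL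
    · rw [← hL]; simp
    · rw [div_le_one (by positivity)]
      calc sInf (Set.range (altitude v)) ≤ longestEdge v := minalt_le_longestEdge hk v
        _ ≤ k * longestEdge v := by
          have h1k : (1:ℝ) ≤ k := by exact_mod_cast Nat.one_le_iff_ne_zero.2 hk
          nlinarith

def singSet (v : Fin (k+1) → EuclideanSpace ℝ (Fin n)) : Set ℝ :=
  { r : ℝ | ∃ x : EuclideanSpace ℝ (Fin k), ‖x‖ = 1 ∧ r = ‖Pv v x‖ }

lemma smallestSing_eq' (v : Fin (k+1) → EuclideanSpace ℝ (Fin n)) :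
    smallestSing (edgeMat v) = sInf (singSet v) := smallestSing_eq v

lemma singSet_nonempty (hk : k ≠ 0) (v : Fin (k+1) → EuclideanSpace ℝ (Fin n)) :
    (singSet v).Nonempty := by
  refine ⟨_, EuclideanSpace.single (⟨0, by omega⟩ : Fin k) (1:ℝ), ?_, rfl⟩
  simp [EuclideanSpace.norm_single]

lemma singSet_bddBelow (v : Fin (k+1) → EuclideanSpace ℝ (Fin n)) :
    BddBelow (singSet v) :=
  ⟨0, fun r hr => by obtain ⟨x, -, rfl⟩ := hr; exact norm_nonneg _⟩

lemma smallestSing_nonneg (v : Fin (k+1) → EuclideanSpace ℝ (Fin n)) :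
    0 ≤ smallestSing (edgeMat v) := by
  rw [smallestSing_eq']
  rcases Set.eq_empty_or_nonempty (singSet v) with h | h
  · rw [h]; simp [Real.sInf_empty]
  · exact le_csInf h (fun r hr => by obtain ⟨x, -, rfl⟩ := hr; exact norm_nonneg _)

lemma smallestSing_le_norm (v : Fin (k+1) → EuclideanSpace ℝ (Fin n))
    (x : EuclideanSpace ℝ (Fin k)) (hx : ‖x‖ = 1) :
    smallestSing (edgeMat v) ≤ ‖Pv v x‖ := by
  rw [smallestSing_eq']
  exact csInf_le (singSet_bddBelow v) ⟨x, hx, rfl⟩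

lemma le_smallestSing (hk : k ≠ 0) (v : Fin (k+1) → EuclideanSpace ℝ (Fin n)) (c : ℝ)
    (h : ∀ x : EuclideanSpace ℝ (Fin k), ‖x‖ = 1 → c ≤ ‖Pv v x‖) :
    c ≤ smallestSing (edgeMat v) := by
  rw [smallestSing_eq']
  exact le_csInf (singSet_nonempty hk v) (fun r hr => by obtain ⟨x, hx, rfl⟩ := hr; exact h x hx)

lemma Pv_smul (v : Fin (k+1) → EuclideanSpace ℝ (Fin n)) (c : ℝ) (x : EuclideanSpace ℝ (Fin k)) :
    Pv v (c • x) = c • Pv v x := by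
  unfold Pv
  rw [Finset.smul_sum]
  refine Finset.sum_congr rfl fun l _ => ?_
  rw [smul_smul]
  congr 1

lemma smallestSing_mul_norm_le (v : Fin (k+1) → EuclideanSpace ℝ (Fin n))
    (x : EuclideanSpace ℝ (Fin k)) :
    smallestSing (edgeMat v) * ‖x‖ ≤ ‖Pv v x‖ := by
  rcases eq_or_ne x 0 with rfl | hx
  · simp [norm_nonneg]
  · have hnx : ‖x‖ ≠ 0 := norm_ne_zero_iff.2 hx
    have hu : ‖(‖x‖⁻¹ • x : EuclideanSpace ℝ (Fin k))‖ = 1 := by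
      rw [norm_smul, norm_inv, norm_norm, inv_mul_cancel₀ hnx]
    have := smallestSing_le_norm v _ hu
    rw [Pv_smul, norm_smul, norm_inv, norm_norm] at this
    have hpos : (0:ℝ) < ‖x‖ := lt_of_le_of_ne (norm_nonneg x) (Ne.symm hnx)
    calc smallestSing (edgeMat v) * ‖x‖ ≤ (‖x‖⁻¹ * ‖Pv v x‖) * ‖x‖ := by
          apply mul_le_mul_of_nonneg_right this (norm_nonneg x)
      _ = ‖Pv v x‖ := by field_simp

lemma my_le_infDist {α : Type*} [MetricSpace α] {s : Set α} {x : α} {c : ℝ}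
    (hs : s.Nonempty) (h : ∀ y ∈ s, c ≤ dist x y) : c ≤ Metric.infDist x s := by
  by_contra hlt
  push_neg at hlt
  obtain ⟨y, hy, hxy⟩ := (Metric.infDist_lt_iff hs).1 hlt
  exact absurd (h y hy) (by linarith)

lemma image_add_right_submodule (W : Submodule ℝ (EuclideanSpace ℝ (Fin n))) {w : EuclideanSpace ℝ (Fin n)}
    (hw : w ∈ W) : (fun z => z + w) '' (W : Set (EuclideanSpace ℝ (Fin n))) = W := by
  ext a
  constructor
  · rintro ⟨b, hb, rfl⟩; exact W.add_mem hb hw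
  · intro ha; exact ⟨a - w, W.sub_mem ha hw, sub_add_cancel a w⟩

lemma infDist_add_mem (W : Submodule ℝ (EuclideanSpace ℝ (Fin n))) (y : EuclideanSpace ℝ (Fin n))
    {w : EuclideanSpace ℝ (Fin n)} (hw : w ∈ W) :
    Metric.infDist (y + w) (W : Set (EuclideanSpace ℝ (Fin n))) =
      Metric.infDist y (W : Set (EuclideanSpace ℝ (Fin n))) := by
  have hiso : Isometry (fun z : EuclideanSpace ℝ (Fin n) => z + w) :=
    Isometry.of_dist_eq (fun a b => by simp [dist_eq_norm])
  have := Metric.infDist_image (t := (W : Set (EuclideanSpace ℝ (Fin n)))) (x := y) hiso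
  rwa [image_add_right_submodule W hw] at this

lemma abs_mul_infDist_le (W : Submodule ℝ (EuclideanSpace ℝ (Fin n))) (c : ℝ)
    (y : EuclideanSpace ℝ (Fin n)) :
    |c| * Metric.infDist y (W : Set (EuclideanSpace ℝ (Fin n))) ≤
      Metric.infDist (c • y) (W : Set (EuclideanSpace ℝ (Fin n))) := by
  rcases eq_or_ne c 0 with rfl | hc
  · simpa using Metric.infDist_nonneg
  · apply my_le_infDist ⟨0, W.zero_mem⟩
    intro u hu
    have hmem : c⁻¹ • u ∈ W := W.smul_mem _ hu
    have h1 : Metric.infDist y (W : Set (EuclideanSpace ℝ (Fin n))) ≤ dist y (c⁻¹ • u) :=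
      Metric.infDist_le_dist_of_mem hmem
    have h2 : dist (c • y) u = |c| * dist y (c⁻¹ • u) := by
      rw [dist_eq_norm, dist_eq_norm, ← Real.norm_eq_abs, ← norm_smul]
      congr 1
      rw [smul_sub, smul_smul, mul_inv_cancel₀ hc, one_smul]
    rw [h2]
    exact mul_le_mul_of_nonneg_left h1 (abs_nonneg c)

def Wfacet (v : Fin (k+1) → EuclideanSpace ℝ (Fin n)) (j : Fin k) :
    Submodule ℝ (EuclideanSpace ℝ (Fin n)) :=
  Submodule.span ℝ (Set.range (fun i : {l : Fin k // l ≠ j} => pvec v i))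

lemma mk'_eq_image (v : Fin (k+1) → EuclideanSpace ℝ (Fin n)) (j : Fin k) :
    (AffineSubspace.mk' (v 0) (Wfacet v j) : Set (EuclideanSpace ℝ (Fin n))) =
      (fun w => v 0 + w) '' (Wfacet v j : Set (EuclideanSpace ℝ (Fin n))) := by
  ext q
  rw [SetLike.mem_coe, AffineSubspace.mem_mk']
  constructor
  · intro h; exact ⟨q - v 0, h, by simp⟩
  · rintro ⟨w, hw, rfl⟩
    simpa [vsub_eq_sub] using hw

lemma facet_le_mk' (v : Fin (k+1) → EuclideanSpace ℝ (Fin n)) (j : Fin k) :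
    affineSpan ℝ (v '' {l | l ≠ j.succ}) ≤ AffineSubspace.mk' (v 0) (Wfacet v j) := by
  apply affineSpan_le.2
  rintro q ⟨l, hl, rfl⟩
  rw [SetLike.mem_coe, AffineSubspace.mem_mk']
  rcases Fin.eq_zero_or_eq_succ l with rfl | ⟨m, rfl⟩
  · simp
  · have hm : m ≠ j := fun h => hl (by rw [h])
    exact Submodule.subset_span ⟨⟨m, hm⟩, rfl⟩

lemma mk'_le_facet (v : Fin (k+1) → EuclideanSpace ℝ (Fin n)) (j : Fin k) :
    (AffineSubspace.mk' (v 0) (Wfacet v j) : Set (EuclideanSpace ℝ (Fin n))) ⊆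
      (affineSpan ℝ (v '' {l | l ≠ j.succ}) : Set (EuclideanSpace ℝ (Fin n))) := by
  intro q hq
  rw [SetLike.mem_coe, AffineSubspace.mem_mk'] at hq
  have h0 : v 0 ∈ affineSpan ℝ (v '' {l | l ≠ j.succ}) :=
    subset_affineSpan ℝ _ ⟨0, (Fin.succ_ne_zero j).symm, rfl⟩
  have hdir : Wfacet v j ≤ (affineSpan ℝ (v '' {l | l ≠ j.succ})).direction := by
    apply Submodule.span_le.2
    rintro w ⟨⟨m, hm⟩, rfl⟩
    have hmem : v m.succ ∈ affineSpan ℝ (v '' {l | l ≠ j.succ}) :=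
      subset_affineSpan ℝ _ ⟨m.succ, fun h => hm (Fin.succ_injective _ h), rfl⟩
    exact AffineSubspace.vsub_mem_direction hmem h0
  have : (q -ᵥ v 0) +ᵥ (v 0) ∈ affineSpan ℝ (v '' {l | l ≠ j.succ}) :=
    AffineSubspace.vadd_mem_of_mem_direction (hdir hq) h0
  simpa using this

lemma altitude_le_infDist_pvec (v : Fin (k+1) → EuclideanSpace ℝ (Fin n)) (j : Fin k) :
    altitude v j.succ ≤ Metric.infDist (pvec v j) (Wfacet v j : Set (EuclideanSpace ℝ (Fin n))) := by
  have hiso : Isometry (fun w : EuclideanSpace ℝ (Fin n) => v 0 + w) :=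
    Isometry.of_dist_eq (fun a b => by simp [dist_eq_norm])
  have himg := Metric.infDist_image (t := (Wfacet v j : Set (EuclideanSpace ℝ (Fin n))))
    (x := pvec v j) hiso
  have hpt : (fun w : EuclideanSpace ℝ (Fin n) => v 0 + w) (pvec v j) = v j.succ := by
    simp [pvec]
  rw [show v 0 + pvec v j = v j.succ by simp [pvec], ← mk'_eq_image] at himg
  rw [← himg]
  apply Metric.infDist_le_infDist_of_subset (mk'_le_facet v j)
  exact ⟨v 0, AffineSubspace.self_mem_mk' _ _⟩

lemma lemB (hk : k ≠ 0) (v : Fin (k+1) → EuclideanSpace ℝ (Fin n)) :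
    Real.sqrt k * thickness v * longestEdge v ≤ smallestSing (edgeMat v) := by
  have hkpos : 0 < (k:ℝ) := by exact_mod_cast Nat.pos_of_ne_zero hk
  rcases eq_or_lt_of_le (longestEdge_nonneg v) with hL | hL
  · rw [← hL, mul_zero]
    exact smallestSing_nonneg v
  · set A := sInf (Set.range (altitude v)) with hA
    have hA0 : 0 ≤ A := minalt_nonneg v
    have hsqpos : 0 < Real.sqrt k := Real.sqrt_pos.2 hkpos
    have hsq : Real.sqrt (k:ℝ) * Real.sqrt k = k := Real.mul_self_sqrt (le_of_lt hkpos)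
    have key : Real.sqrt k * thickness v * longestEdge v = (1 / Real.sqrt k) * A := by
      unfold thickness
      rw [if_neg hk]
      field_simp
      linear_combination sInf (Set.range (altitude v)) * hsq
    rw [key]
    apply le_smallestSing hk
    intro x hx
    -- find a coordinate with large absolute value
    have hsum : ∑ l, (x l) ^ 2 = 1 := by
      have hn := EuclideanSpace.norm_eq x
      rw [hx] at hn
      have h2 : Real.sqrt (∑ l, ‖x l‖ ^ 2) = 1 := hn.symm
      have h3 : (∑ l, ‖x l‖ ^ 2) = 1 := Real.sqrt_eq_one.1 h2
      simpa [Real.norm_eq_abs, sq_abs] using h3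
    have hne : Nonempty (Fin k) := ⟨⟨0, Nat.pos_of_ne_zero hk⟩⟩
    have hsum' : ∑ _l : Fin k, (1:ℝ)/k ≤ ∑ l, (x l) ^ 2 := by
      rw [hsum, Finset.sum_const, Finset.card_univ, Fintype.card_fin, nsmul_eq_mul]
      rw [mul_one_div, div_self (ne_of_gt hkpos)]
    obtain ⟨j, -, hj⟩ := Finset.exists_le_of_sum_le Finset.univ_nonempty hsum'
    have hxj : 1 / Real.sqrt k ≤ |x j| := by
      have := Real.sqrt_le_sqrt hj
      rwa [Real.sqrt_sq_eq_abs, one_div, Real.sqrt_inv, ← one_div] at this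
    -- decompose Pv v x
    set w := ∑ l ∈ Finset.univ.erase j, x l • pvec v l with hw
    have hwmem : w ∈ Wfacet v j := by
      apply Submodule.sum_mem
      intro l hl
      exact Submodule.smul_mem _ _ (Submodule.subset_span ⟨⟨l, (Finset.mem_erase.1 hl).1⟩, rfl⟩)
    have hdecomp : Pv v x = x j • pvec v j + w := by
      rw [hw]
      exact (Finset.add_sum_erase _ _ (Finset.mem_univ j)).symm
    have step1 : Metric.infDist (Pv v x) (Wfacet v j : Set (EuclideanSpace ℝ (Fin n))) ≤ ‖Pv v x‖ := by
      have := Metric.infDist_le_dist_of_mem (x := Pv v x) (Wfacet v j).zero_mem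
      simpa using this
    have step2 : Metric.infDist (Pv v x) (Wfacet v j : Set (EuclideanSpace ℝ (Fin n))) =
        Metric.infDist (x j • pvec v j) (Wfacet v j : Set (EuclideanSpace ℝ (Fin n))) := by
      rw [hdecomp]
      exact infDist_add_mem _ _ hwmem
    have step3 := abs_mul_infDist_le (Wfacet v j) (x j) (pvec v j)
    have step4 : A ≤ Metric.infDist (pvec v j) (Wfacet v j : Set (EuclideanSpace ℝ (Fin n))) := by
      refine le_trans ?_ (altitude_le_infDist_pvec v j)
      apply csInf_le _ (Set.mem_range_self _)
      exact ⟨0, fun r hr => by obtain ⟨i, rfl⟩ := hr; exact altitude_nonneg v i⟩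
    calc (1 / Real.sqrt k) * A ≤ |x j| * Metric.infDist (pvec v j) (Wfacet v j : Set (EuclideanSpace ℝ (Fin n))) := by
          apply mul_le_mul hxj step4 hA0 (abs_nonneg _)
      _ ≤ Metric.infDist (x j • pvec v j) (Wfacet v j : Set (EuclideanSpace ℝ (Fin n))) := step3
      _ = Metric.infDist (Pv v x) (Wfacet v j : Set (EuclideanSpace ℝ (Fin n))) := step2.symm
      _ ≤ ‖Pv v x‖ := step1

lemma smallestSing_le_altitude (v : Fin (k+1) → EuclideanSpace ℝ (Fin n)) (j : Fin k) :
    smallestSing (edgeMat v) ≤ altitude v j.succ := by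
  unfold altitude
  have hne : (affineSpan ℝ (v '' {l | l ≠ j.succ}) : Set (EuclideanSpace ℝ (Fin n))).Nonempty :=
    ⟨v 0, subset_affineSpan ℝ _ ⟨0, (Fin.succ_ne_zero j).symm, rfl⟩⟩
  apply my_le_infDist hne
  intro q hq
  have hq' : q ∈ AffineSubspace.mk' (v 0) (Wfacet v j) := facet_le_mk' v j hq
  rw [AffineSubspace.mem_mk'] at hq'
  -- q - v 0 ∈ span of pvec off j
  set w := q - v 0 with hwdef
  have hw : w ∈ Wfacet v j := hq'
  rw [Wfacet] at hw
  obtain ⟨c, hc⟩ := (Submodule.mem_span_range_iff_exists_fun ℝ).1 hw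
  classical
  set c' : Fin k → ℝ := fun l => if h : l = j then 0 else c ⟨l, h⟩ with hc'
  set x : EuclideanSpace ℝ (Fin k) := WithLp.toLp 2 (fun l => if l = j then 1 else - c' l) with hxdef
  have hxj : x j = 1 := by simp [hxdef]
  have hsubty : ∑ i : {l : Fin k // l ≠ j}, c i • pvec v (i : Fin k) = ∑ l ∈ Finset.univ.erase j, c' l • pvec v l := by
    rw [Finset.sum_subtype (p := fun l : Fin k => l ≠ j) (Finset.univ.erase j)
      (fun m => by simp) (fun l => c' l • pvec v l)]
    apply Finset.sum_congr rfl
    intro i _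
    congr 1
    simp [hc', i.2]
  have hkey : v j.succ - q = Pv v x := by
    have : v j.succ - q = pvec v j - w := by
      rw [hwdef, pvec]; abel
    rw [this, ← hc, hsubty, Pv]
    rw [← Finset.add_sum_erase _ _ (Finset.mem_univ j), hxj, one_smul]
    rw [sub_eq_add_neg, ← Finset.sum_neg_distrib]
    congr 1
    apply Finset.sum_congr rfl
    intro l hl
    have hlj : l ≠ j := (Finset.mem_erase.1 hl).1
    simp [hxdef, hlj, neg_smul]
  have hxnorm : 1 ≤ ‖x‖ := by
    have h1 : |x j| ≤ ‖x‖ := by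
      rw [EuclideanSpace.norm_eq]
      have : |x j| = Real.sqrt (‖x j‖ ^ 2) := by
        rw [Real.norm_eq_abs, Real.sqrt_sq_eq_abs, abs_abs]
      rw [this]
      apply Real.sqrt_le_sqrt
      apply Finset.single_le_sum (f := fun l => ‖x l‖ ^ 2) (fun l _ => by positivity) (Finset.mem_univ j)
    rw [hxj] at h1
    simpa using h1
  have := smallestSing_mul_norm_le v x
  have h2 : smallestSing (edgeMat v) * 1 ≤ smallestSing (edgeMat v) * ‖x‖ :=
    mul_le_mul_of_nonneg_left hxnorm (smallestSing_nonneg v)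
  rw [dist_eq_norm, hkey]
  calc smallestSing (edgeMat v) = smallestSing (edgeMat v) * 1 := (mul_one _).symm
    _ ≤ smallestSing (edgeMat v) * ‖x‖ := h2
    _ ≤ ‖Pv v x‖ := this

lemma inner_pvec (v : Fin (k+1) → EuclideanSpace ℝ (Fin n)) (a b : Fin k) :
    (inner ℝ (pvec v a) (pvec v b) : ℝ) =
      (dist (v a.succ) (v 0) ^ 2 + dist (v b.succ) (v 0) ^ 2
        - dist (v a.succ) (v b.succ) ^ 2) / 2 := by
  have h := norm_sub_sq_real (pvec v a) (pvec v b)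
  have he : pvec v a - pvec v b = v a.succ - v b.succ := by
    simp only [pvec]; abel
  rw [he] at h
  simp only [dist_eq_norm, pvec] at *
  linarith

lemma norm_Pv_sq (v : Fin (k+1) → EuclideanSpace ℝ (Fin n)) (x : EuclideanSpace ℝ (Fin k)) :
    ‖Pv v x‖ ^ 2 = ∑ a, ∑ b, x a * x b * (inner ℝ (pvec v a) (pvec v b) : ℝ) := by
  rw [← real_inner_self_eq_norm_sq, Pv]
  rw [inner_sum]
  simp_rw [sum_inner, real_inner_smul_left, real_inner_smul_right]
  rw [Finset.sum_comm]
  apply Finset.sum_congr rfl; intro a _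
  apply Finset.sum_congr rfl; intro b _
  ring

set_option maxHeartbeats 1000000 in
lemma lemA (hk : k ≠ 0) (v vt : Fin (k+1) → EuclideanSpace ℝ (Fin n)) (η : ℝ)
    (hη0 : 0 ≤ η) (hη1 : η ≤ 1)
    (hdist : ∀ i j : Fin (k+1),
      |dist (v i) (v j) - dist (vt i) (vt j)| ≤ (η * thickness v ^ 2 / 4) * longestEdge v) :
    (1 - η) * smallestSing (edgeMat v) ≤ smallestSing (edgeMat vt) := by
  have hkpos : 0 < (k:ℝ) := by exact_mod_cast Nat.pos_of_ne_zero hk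
  set Θ := thickness v with hΘ
  set L := longestEdge v with hLdef
  set C₀ := η * Θ ^ 2 / 4 with hC₀
  set s := smallestSing (edgeMat v) with hs
  have hΘ0 : 0 ≤ Θ := thickness_nonneg v
  have hΘ1 : Θ ≤ 1 := thickness_le_one v
  have hL0 : 0 ≤ L := longestEdge_nonneg v
  have hC0 : 0 ≤ C₀ := by positivity
  have hC14 : C₀ ≤ 1/4 := by
    rw [hC₀]; nlinarith
  have hs0 : 0 ≤ s := smallestSing_nonneg v
  have hsB : Real.sqrt k * Θ * L ≤ s := lemB hk v
  have hs2 : (k:ℝ) * Θ ^ 2 * L ^ 2 ≤ s ^ 2 := by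
    have h1 : 0 ≤ Real.sqrt k * Θ * L := by positivity
    have h2 : (Real.sqrt k * Θ * L) ^ 2 ≤ s ^ 2 := by
      apply pow_le_pow_left₀ h1 hsB
    have h3 : (Real.sqrt k * Θ * L) ^ 2 = k * Θ ^ 2 * L ^ 2 := by
      have : Real.sqrt (k:ℝ) ^ 2 = k := Real.sq_sqrt (le_of_lt hkpos)
      nlinarith [this]
    linarith [h2, h3.symm.le]
  -- squared-distance perturbation bound
  set B₁ := C₀ * L ^ 2 * (2 + C₀) with hB₁
  have key : ∀ a b : Fin (k+1), |dist (vt a) (vt b) ^ 2 - dist (v a) (v b) ^ 2| ≤ B₁ := by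
    intro a b
    have h1 := hdist a b
    have h2 : dist (v a) (v b) ≤ L := dist_le_longestEdge v a b
    have h3 : 0 ≤ dist (v a) (v b) := dist_nonneg
    have h4 : 0 ≤ dist (vt a) (vt b) := dist_nonneg
    obtain ⟨h5, h6⟩ := abs_le.1 h1
    rw [abs_le]
    constructor <;> nlinarith
  -- entry bound
  have entry : ∀ a b : Fin k,
      |(inner ℝ (pvec vt a) (pvec vt b) : ℝ) - (inner ℝ (pvec v a) (pvec v b) : ℝ)| ≤ 3/2 * B₁ := by
    intro a b
    rw [inner_pvec, inner_pvec]
    have k1 := abs_le.1 (key 0 a.succ)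
    have k2 := abs_le.1 (key 0 b.succ)
    have k3 := abs_le.1 (key a.succ b.succ)
    rw [abs_le]
    rw [dist_comm (vt 0), dist_comm (v 0)] at k1 k2
    constructor <;> linarith [k1.1, k1.2, k2.1, k2.2, k3.1, k3.2]
  have main : ∀ x : EuclideanSpace ℝ (Fin k), ‖x‖ = 1 → (1 - η) * s ≤ ‖Pv vt x‖ := by
    intro x hx
    have hsum : ∑ l, (x l) ^ 2 = 1 := by
      have hn := EuclideanSpace.norm_eq x
      rw [hx] at hn
      have h3 : (∑ l, ‖x l‖ ^ 2) = 1 := Real.sqrt_eq_one.1 hn.symm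
      simpa [Real.norm_eq_abs, sq_abs] using h3
    have habs : (∑ l, |x l|) ^ 2 ≤ (k:ℝ) := by
      have := sq_sum_le_card_mul_sum_sq (s := Finset.univ) (f := fun l => |x l|)
      simp only [Finset.card_univ, Fintype.card_fin, sq_abs] at this
      rw [hsum] at this
      simpa using this
    have hdiff : |‖Pv vt x‖ ^ 2 - ‖Pv v x‖ ^ 2| ≤ 3/2 * B₁ * k := by
      rw [norm_Pv_sq, norm_Pv_sq, ← Finset.sum_sub_distrib]
      simp_rw [← Finset.sum_sub_distrib, ← mul_sub]
      calc |∑ a, ∑ b, x a * x b * ((inner ℝ (pvec vt a) (pvec vt b) : ℝ) - (inner ℝ (pvec v a) (pvec v b) : ℝ))|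
          ≤ ∑ a, |∑ b, x a * x b * ((inner ℝ (pvec vt a) (pvec vt b) : ℝ) - (inner ℝ (pvec v a) (pvec v b) : ℝ))| :=
            Finset.abs_sum_le_sum_abs _ _
        _ ≤ ∑ a, ∑ b, |x a * x b * ((inner ℝ (pvec vt a) (pvec vt b) : ℝ) - (inner ℝ (pvec v a) (pvec v b) : ℝ))| := by
            apply Finset.sum_le_sum; intro a _; exact Finset.abs_sum_le_sum_abs _ _
        _ ≤ ∑ a, ∑ b, |x a| * |x b| * (3/2 * B₁) := by
            apply Finset.sum_le_sum; intro a _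
            apply Finset.sum_le_sum; intro b _
            rw [abs_mul, abs_mul]
            apply mul_le_mul_of_nonneg_left (entry a b) (by positivity)
        _ = (3/2 * B₁) * (∑ a, |x a|) ^ 2 := by
            rw [sq, Finset.sum_mul_sum]
            rw [Finset.mul_sum]
            apply Finset.sum_congr rfl; intro a _
            rw [Finset.mul_sum]
            apply Finset.sum_congr rfl; intro b _
            ring
        _ ≤ 3/2 * B₁ * k := by
            apply mul_le_mul_of_nonneg_left habs (by positivity)
    have hPvx : s ≤ ‖Pv v x‖ := by
      have := smallestSing_mul_norm_le v x
      rwa [hx, mul_one] at this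
    have hPvx2 : s ^ 2 ≤ ‖Pv v x‖ ^ 2 := pow_le_pow_left₀ hs0 hPvx 2
    have hB1le : 3/2 * B₁ * k ≤ (2 * η - η ^ 2) * s ^ 2 := by
      have h1 : 3/2 * B₁ * k ≤ 27/32 * η * (k * Θ ^ 2 * L ^ 2) := by
        have hstep : (3:ℝ)/2 * B₁ * k = 3/2 * C₀ * L^2 * (2 + C₀) * k := by rw [hB₁]; ring
        have h2a : 3/2 * C₀ * L^2 * (2+C₀) * k ≤ 3/2 * C₀ * L^2 * (9/4) * k := by
          nlinarith [mul_nonneg (mul_nonneg (mul_nonneg hC0 (sq_nonneg L)) hkpos.le)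
            (sub_nonneg.2 hC14)]
        have h2b : 3/2 * C₀ * L^2 * (9/4) * k = 27/32 * η * ((k:ℝ) * Θ^2 * L^2) := by
          rw [hC₀]; ring
        linarith
      have h2 : 27/32 * η * (k * Θ ^ 2 * L ^ 2) ≤ η * s ^ 2 := by
        nlinarith
      have h3 : η * s ^ 2 ≤ (2 * η - η ^ 2) * s ^ 2 := by
        nlinarith [mul_nonneg (mul_nonneg hη0 (sub_nonneg.2 hη1)) (sq_nonneg s)]
      linarith
    have hfinal2 : ((1 - η) * s) ^ 2 ≤ ‖Pv vt x‖ ^ 2 := by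
      have h1 := (abs_le.1 hdiff).1
      have : ((1-η) * s)^2 = s^2 - (2*η - η^2) * s^2 := by ring
      nlinarith
    have h1η : 0 ≤ (1 - η) * s := mul_nonneg (by linarith) hs0
    calc (1 - η) * s = Real.sqrt (((1 - η) * s) ^ 2) := (Real.sqrt_sq h1η).symm
      _ ≤ Real.sqrt (‖Pv vt x‖ ^ 2) := Real.sqrt_le_sqrt hfinal2
      _ = ‖Pv vt x‖ := Real.sqrt_sq (norm_nonneg _)
  exact le_smallestSing hk vt _ main

lemma longestEdge_comp (v : Fin (k+1) → EuclideanSpace ℝ (Fin n)) (π : Equiv.Perm (Fin (k+1))) :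
    longestEdge (v ∘ π) = longestEdge v := by
  unfold longestEdge
  congr 1
  ext d
  constructor
  · rintro ⟨i, j, rfl⟩; exact ⟨π i, π j, rfl⟩
  · rintro ⟨i, j, rfl⟩; exact ⟨π.symm i, π.symm j, by simp⟩

lemma altitude_comp (v : Fin (k+1) → EuclideanSpace ℝ (Fin n)) (π : Equiv.Perm (Fin (k+1)))
    (i : Fin (k+1)) : altitude (v ∘ π) i = altitude v (π i) := by
  unfold altitude
  have h2 : ⇑π '' {j | j ≠ i} = {j | j ≠ π i} := by
    ext m
    constructor
    · rintro ⟨l, hl, rfl⟩; exact fun h => hl (π.injective h)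
    · intro hm
      exact ⟨π.symm m, fun h => hm (by rw [← h]; simp), by simp⟩
  have hset : (v ∘ π) '' {j | j ≠ i} = v '' {j | j ≠ π i} := by
    rw [Set.image_comp, h2]
  rw [hset]
  simp

lemma thickness_comp (v : Fin (k+1) → EuclideanSpace ℝ (Fin n)) (π : Equiv.Perm (Fin (k+1))) :
    thickness (v ∘ π) = thickness v := by
  unfold thickness
  have hrange : Set.range (altitude (v ∘ π)) = Set.range (altitude v) := by
    have : altitude (v ∘ π) = altitude v ∘ π := funext (altitude_comp v π)
    rw [this, Set.range_comp, π.surjective.range_eq, Set.image_univ]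
  rw [hrange, longestEdge_comp]

lemma smallestSing_k0 (h0 : k = 0) (v : Fin (k+1) → EuclideanSpace ℝ (Fin n)) :
    smallestSing (edgeMat v) = 0 := by
  rw [smallestSing_eq']
  have : singSet v = ∅ := by
    ext r
    simp only [singSet, Set.mem_setOf_eq, Set.mem_empty_iff_false, iff_false]
    rintro ⟨x, hx, -⟩
    have : x = 0 := by
      ext l
      exact absurd (l.2) (by omega)
    rw [this] at hx
    simp at hx
  rw [this, Real.sInf_empty]

theorem thickness_under_distortion' {n k : ℕ}
    (v vt : Fin (k + 1) → EuclideanSpace ℝ (Fin n)) (C₀ η : ℝ)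
    (hη0 : 0 ≤ η) (hη1 : η ≤ 1) (hC₀ : C₀ = η * thickness v ^ 2 / 4)
    (hdist : ∀ i j : Fin (k + 1), i < j →
      |dist (v i) (v j) - dist (vt i) (vt j)| ≤ C₀ * longestEdge v) :
    smallestSing (edgeMat vt) ≥ (1 - η) * smallestSing (edgeMat v) ∧
    thickness vt ≥ 4 / (5 * Real.sqrt k) * (1 - η) * thickness v := by
  rcases eq_or_ne k 0 with hk0 | hk
  · constructor
    · rw [smallestSing_k0 hk0, smallestSing_k0 hk0, mul_zero]
    · rw [ge_iff_le]
      have h1 : thickness vt = 1 := by unfold thickness; rw [if_pos hk0]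
      have hsq0 : (5:ℝ) * Real.sqrt k = 0 := by rw [hk0]; norm_num
      rw [h1, hsq0, div_zero, zero_mul, zero_mul]
      norm_num
  · -- setup
    have hΘ0 : 0 ≤ thickness v := thickness_nonneg v
    have hΘ1 : thickness v ≤ 1 := thickness_le_one v
    have hL0 : 0 ≤ longestEdge v := longestEdge_nonneg v
    have hC0' : 0 ≤ C₀ := by rw [hC₀]; positivity
    have hC14 : C₀ ≤ 1/4 := by rw [hC₀]; nlinarith
    have hsym : ∀ i j : Fin (k+1),
        |dist (v i) (v j) - dist (vt i) (vt j)| ≤ C₀ * longestEdge v := by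
      intro i j
      rcases lt_trichotomy i j with h | h | h
      · exact hdist i j h
      · subst h; simpa using mul_nonneg hC0' hL0
      · rw [dist_comm (v i), dist_comm (vt i)]
        exact hdist j i h
    have hsym' : ∀ i j : Fin (k+1),
        |dist (v i) (v j) - dist (vt i) (vt j)| ≤ (η * thickness v ^ 2 / 4) * longestEdge v := by
      intro i j; rw [← hC₀]; exact hsym i j
    have part1 : (1 - η) * smallestSing (edgeMat v) ≤ smallestSing (edgeMat vt) :=
      lemA hk v vt η hη0 hη1 hsym'
    refine ⟨part1, ?_⟩
    rw [ge_iff_le]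
    -- altitude lower bounds via rebasing
    have haltbound : ∀ i : Fin (k+1),
        (1 - η) * (Real.sqrt k * thickness v * longestEdge v) ≤ altitude vt i := by
      intro i
      have hk1 : (1:ℕ) < k + 1 := by omega
      set b : Fin (k+1) := if i = 0 then ⟨1, hk1⟩ else 0 with hb
      have hbi : b ≠ i := by
        rcases eq_or_ne i 0 with h | h
        · rw [hb, if_pos h, h]
          simp [Fin.ext_iff]
        · rw [hb, if_neg h]
          exact fun hh => h hh.symm
      set π : Equiv.Perm (Fin (k+1)) := Equiv.swap 0 b with hπ
      have hπ0 : π 0 = b := Equiv.swap_apply_left 0 b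
      have hne : π.symm i ≠ 0 := by
        intro h
        have : π 0 = i := by rw [← h]; simp
        rw [hπ0] at this
        exact hbi this
      obtain ⟨j, hj⟩ := Fin.eq_succ_of_ne_zero hne
      have hji : π j.succ = i := by rw [← hj]; simp
      have e1 : altitude vt i = altitude (vt ∘ π) j.succ := by
        rw [altitude_comp vt π j.succ, hji]
      have e2 : smallestSing (edgeMat (vt ∘ π)) ≤ altitude (vt ∘ π) j.succ :=
        smallestSing_le_altitude (vt ∘ π) j
      have e3 : (1 - η) * smallestSing (edgeMat (v ∘ π)) ≤ smallestSing (edgeMat (vt ∘ π)) := by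
        apply lemA hk (v ∘ π) (vt ∘ π) η hη0 hη1
        intro a c
        rw [thickness_comp, longestEdge_comp]
        exact hsym' (π a) (π c)
      have e4 : Real.sqrt k * thickness v * longestEdge v ≤ smallestSing (edgeMat (v ∘ π)) := by
        have := lemB hk (v ∘ π)
        rwa [thickness_comp, longestEdge_comp] at this
      have e5 : (1 - η) * (Real.sqrt k * thickness v * longestEdge v) ≤
          (1 - η) * smallestSing (edgeMat (v ∘ π)) :=
        mul_le_mul_of_nonneg_left e4 (by linarith)
      rw [e1]
      linarith
    have hminalt : (1 - η) * (Real.sqrt k * thickness v * longestEdge v) ≤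
        sInf (Set.range (altitude vt)) := by
      apply le_csInf (Set.range_nonempty _)
      rintro r ⟨i, rfl⟩
      exact haltbound i
    -- case on longestEdge v
    rcases eq_or_lt_of_le hL0 with hL | hL
    · have hΘv : thickness v = 0 := by
        unfold thickness
        rw [if_neg hk, ← hL]
        simp
      rw [hΘv, mul_zero]
      exact thickness_nonneg vt
    · -- longestEdge vt is positive and at most (5/4) L
      have hkpos : 0 < (k:ℝ) := by exact_mod_cast Nat.pos_of_ne_zero hk
      have hedgeset : {d : ℝ | ∃ i j, d = dist (vt i) (vt j)}.Nonempty := ⟨_, 0, 0, rfl⟩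
      have hLtle : longestEdge vt ≤ 5/4 * longestEdge v := by
        apply csSup_le hedgeset
        rintro r ⟨i, j, rfl⟩
        have h1 := (abs_le.1 (hsym i j)).1
        have h2 : dist (v i) (v j) ≤ longestEdge v := dist_le_longestEdge v i j
        nlinarith
      -- longestEdge vt > 0 : take the pair attaining L
      have hfin : {d : ℝ | ∃ i j, d = dist (v i) (v j)}.Finite := by
        rw [edgeSet_eq]; exact Set.finite_range _
      have hattain : longestEdge v ∈ {d : ℝ | ∃ i j, d = dist (v i) (v j)} :=
        Set.Nonempty.csSup_mem ⟨_, 0, 0, rfl⟩ hfin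
      obtain ⟨i, j, hij⟩ := hattain
      have hLt0 : 0 < longestEdge vt := by
        have h1 := (abs_le.1 (hsym i j)).2
        have h2 : dist (vt i) (vt j) ≤ longestEdge vt := dist_le_longestEdge vt i j
        nlinarith
      have hΘt : thickness vt = sInf (Set.range (altitude vt)) / (k * longestEdge vt) := by
        unfold thickness; rw [if_neg hk]
      rw [hΘt]
      have hM0 : 0 ≤ (1 - η) * (Real.sqrt k * thickness v * longestEdge v) := by
        have : 0 ≤ Real.sqrt k * thickness v * longestEdge v := by positivity
        exact mul_nonneg (by linarith) this
      have hdiv : (1 - η) * (Real.sqrt k * thickness v * longestEdge v) / (k * (5/4 * longestEdge v)) ≤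
          sInf (Set.range (altitude vt)) / (k * longestEdge vt) := by
        apply div_le_div₀ (le_trans hM0 hminalt) hminalt (by positivity)
        exact mul_le_mul_of_nonneg_left hLtle (le_of_lt hkpos)
      refine le_trans (le_of_eq ?_) hdiv
      have hsq : Real.sqrt (k:ℝ) * Real.sqrt k = k := Real.mul_self_sqrt (le_of_lt hkpos)
      have hsqpos : 0 < Real.sqrt (k:ℝ) := Real.sqrt_pos.2 hkpos
      field_simp
      ring_nf
      nlinarith [hsq, hL, hsqpos, thickness_nonneg v,
        (by rw [Real.sq_sqrt hkpos.le] : η * thickness v * Real.sqrt k ^ 2 = η * thickness v * k),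
        (by rw [Real.sq_sqrt hkpos.le] : thickness v * Real.sqrt k ^ 2 = thickness v * k)]

/-- **Thickness under distortion.** -/
theorem thickness_under_distortion {n k : ℕ}
    (v vt : Fin (k + 1) → EuclideanSpace ℝ (Fin n)) (C₀ η : ℝ)
    (hη0 : 0 ≤ η) (hη1 : η ≤ 1) (hC₀ : C₀ = η * thickness v ^ 2 / 4)
    (hdist : ∀ i j : Fin (k + 1), i < j →
      |dist (v i) (v j) - dist (vt i) (vt j)| ≤ C₀ * longestEdge v) :
    smallestSing (edgeMat vt) ≥ (1 - η) * smallestSing (edgeMat v) ∧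
    thickness vt ≥ 4 / (5 * Real.sqrt k) * (1 - η) * thickness v :=
  thickness_under_distortion' v vt C₀ η hη0 hη1 hC₀ hdist

end
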